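/- With T' constructed from T as above using parameter B, every substring S of T with |S| ≤ B occurs in T' (as a #-free substring), and conversely every #-free substring of T' of length at most B occurs in T. Hence the set of distinct substrings of length ≤ B is the same for T and for the #-free substrings of T'. -/

import Mathlib

/-- `S` occurs in `T` at (0-indexed) starting position `i`. -/
def occursAt {α : Type*} (T S : List α) (i : ℕ) : Prop :=
  i + S.length ≤ T.length ∧ (T.drop i).take S.length = S

/-- Position `i` is within distance `< B` of some phrase start. -/
def nearStart (starts : List ℕ) (B i : ℕ) : Bool :=
  starts.any (fun s => decide (max (i - s) (s - i) < B))

/-- The string `T'` built from `T`: each position within distance `< B` of a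
phrase start is copied (as `some (T[i])`); each maximal run of remaining
positions is replaced by a single separator `none` (playing the role of `#`). -/
def buildTPrime {α : Type*} (T : List α) (starts : List ℕ) (B : ℕ) : List (Option α) :=
  (List.range T.length).flatMap (fun i =>
    if nearStart starts B i then ((T.drop i).take 1).map some
    else if i = 0 ∨ nearStart starts B (i - 1) then [none] else [])

/-- One piece of `buildTPrime`. -/
def piece {α : Type*} (T : List α) (starts : List ℕ) (B i : ℕ) : List (Option α) :=
  if nearStart starts B i then ((T.drop i).take 1).map some
  else if i = 0 ∨ nearStart starts B (i - 1) then [none] else []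

lemma buildTPrime_eq {α : Type*} (T : List α) (starts : List ℕ) (B : ℕ) :
    buildTPrime T starts B = (List.range T.length).flatMap (piece T starts B) := rfl

lemma piece_near {α : Type*} (T : List α) (starts : List ℕ) (B i : ℕ)
    (h : nearStart starts B i = true) (hi : i < T.length) :
    piece T starts B i = [some T[i]] := by
  have h1 : piece T starts B i = ((T.drop i).take 1).map some := by
    unfold piece; rw [if_pos h]
  rw [h1, List.drop_eq_getElem_cons hi, List.take_succ_cons, List.take_zero, List.map_cons,
    List.map_nil]

lemma piece_small {α : Type*} (T : List α) (starts : List ℕ) (B i : ℕ) :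
    piece T starts B i = [] ∨ ∃ c, piece T starts B i = [c] := by
  unfold piece
  split
  · rcases T.drop i with _ | ⟨x, l⟩
    · left; simp
    · right; exact ⟨some x, by simp⟩
  · split
    · right; exact ⟨none, rfl⟩
    · left; rfl

lemma occursAt_infix {α : Type*} {T S : List α} {i : ℕ} (h : occursAt T S i) :
    S <:+: T := by
  refine ⟨T.take i, T.drop (i + S.length), ?_⟩
  have hd : T.drop (i + S.length) = (T.drop i).drop S.length := by
    rw [List.drop_drop]
  nth_rewrite 1 [← h.2]
  rw [List.append_assoc, hd, List.take_append_drop, List.take_append_drop]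

lemma block_eq {α : Type*} (T : List α) (starts : List ℕ) (B : ℕ) :
    ∀ (m a : ℕ), a + m ≤ T.length →
      (∀ j, a ≤ j → j < a + m → nearStart starts B j = true) →
      (List.range' a m).flatMap (piece T starts B) = ((T.drop a).take m).map some := by
  intro m
  induction m with
  | zero => intro a _ _; simp
  | succ m ih =>
    intro a ha hnear
    have ha' : a < T.length := by omega
    rw [List.range'_succ, List.flatMap_cons,
      piece_near T starts B a (hnear a le_rfl (by omega)) ha',
      ih (a + 1) (by omega) (fun j hj hj' => hnear j (by omega) (by omega)),
      List.drop_eq_getElem_cons ha', List.take_succ_cons, List.map_cons, List.singleton_append]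

lemma prefix_near {α : Type*} (T : List α) (starts : List ℕ) (B : ℕ) :
    ∀ (m a : ℕ) (S : List α), a + m ≤ T.length → nearStart starts B a = true →
      (S.map some) <+: (List.range' a m).flatMap (piece T starts B) →
      occursAt T S a := by
  intro m
  induction m with
  | zero =>
    intro a S ha _ hp
    simp only [List.range'_zero, List.flatMap_nil, List.prefix_nil,
      List.map_eq_nil_iff] at hp
    subst hp
    exact ⟨by simpa using ha, by simp⟩
  | succ m ih =>
    intro a S ha hnear hp
    have ha' : a < T.length := by omega
    rw [List.range'_succ, List.flatMap_cons, piece_near T starts B a hnear ha'] at hp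
    rcases S with _ | ⟨x, S'⟩
    · exact ⟨by simp; omega, by simp⟩
    · simp only [List.map_cons, List.singleton_append, List.cons_prefix_cons] at hp
      obtain ⟨hx, hp'⟩ := hp
      have hx' : x = T[a] := by injection hx
      rcases S' with _ | ⟨y, S''⟩
      · refine ⟨by simp; omega, ?_⟩
        simp only [List.length_cons, List.length_nil, List.drop_eq_getElem_cons ha',
          List.take_succ_cons, List.take_zero, hx']
      · rcases m with _ | k
        · simp at hp'
        · by_cases hnear' : nearStart starts B (a + 1) = true
          · obtain ⟨hl, ht⟩ := ih (a + 1) (y :: S'') (by omega) hnear' hp'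
            constructor
            · simp only [List.length_cons] at hl ⊢; omega
            · rw [List.drop_eq_getElem_cons ha', List.length_cons, List.take_succ_cons,
                ht, hx']
          · rw [List.range'_succ, List.flatMap_cons] at hp'
            have hnone : piece T starts B (a + 1) = [none] := by
              simp [piece, hnear', hnear]
            rw [hnone] at hp'
            simp [List.cons_prefix_cons] at hp'

lemma prefix_case {α : Type*} (T : List α) (starts : List ℕ) (B : ℕ) :
    ∀ (m a : ℕ) (S : List α), a + m ≤ T.length → S ≠ [] →
      (S.map some) <+: (List.range' a m).flatMap (piece T starts B) →
      S <:+: T := by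
  intro m
  induction m with
  | zero =>
    intro a S _ hne hp
    simp at hp
    rcases hp with ⟨h1, -⟩
    exact absurd (by simpa using h1) hne
  | succ m ih =>
    intro a S ha hne hp
    by_cases hnear : nearStart starts B a = true
    · exact occursAt_infix (prefix_near T starts B (m + 1) a S ha hnear hp)
    · rw [List.range'_succ, List.flatMap_cons] at hp
      by_cases h2 : a = 0 ∨ nearStart starts B (a - 1) = true
      · have : piece T starts B a = [none] := by simp [piece, hnear, h2]
        rw [this] at hp
        rcases S with _ | ⟨x, S'⟩
        · exact absurd rfl hne
        · simp [List.cons_prefix_cons] at hp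
      · have : piece T starts B a = [] := by simp [piece, hnear, h2]
        rw [this, List.nil_append] at hp
        exact ih (a + 1) S (by omega) hne hp

lemma infix_case {α : Type*} (T : List α) (starts : List ℕ) (B : ℕ) :
    ∀ (m a : ℕ) (S : List α), a + m ≤ T.length → S ≠ [] →
      (S.map some) <:+: (List.range' a m).flatMap (piece T starts B) →
      S <:+: T := by
  intro m
  induction m with
  | zero =>
    intro a S _ hne hp
    simp at hp
    exact absurd (by simpa using hp) hne
  | succ m ih =>
    intro a S ha hne hp
    obtain ⟨u, v, huv⟩ := hp
    rw [List.range'_succ, List.flatMap_cons] at huv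
    rcases u with _ | ⟨x, u'⟩
    · exact prefix_case T starts B (m + 1) a S ha hne
        (by rw [List.range'_succ, List.flatMap_cons, ← huv]; simp)
    · rcases piece_small T starts B a with h | ⟨c, h⟩
      · rw [h, List.nil_append] at huv
        exact ih (a + 1) S (by omega) hne ⟨x :: u', v, huv⟩
      · rw [h] at huv
        simp only [List.cons_append, List.singleton_append, List.cons.injEq] at huv
        exact ih (a + 1) S (by omega) hne ⟨u', v, huv.2⟩

theorem stmt10 {α : Type*} (T : List α) (starts : List ℕ) (B : ℕ) (hB : 1 ≤ B)
    (h0 : T ≠ [] → 0 ∈ starts)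
    (hlt : ∀ s ∈ starts, s < T.length)
    (hprim : ∀ S : List α, S ≠ [] → S <:+: T →
      ∃ i, occursAt T S i ∧ ∃ s ∈ starts, i ≤ s ∧ s < i + S.length) :
    ∀ S : List α, S.length ≤ B →
      (S <:+: T ↔ (S.map some) <:+: buildTPrime T starts B) := by
  intro S hSB
  rcases eq_or_ne S ([] : List α) with rfl | hne
  · simp [List.nil_infix]
  constructor
  · intro hinf
    obtain ⟨i, hocc, s, hs, his, hsi⟩ := hprim S hne hinf
    -- every position in [i, i + |S|) is near
    have hnear : ∀ j, i ≤ j → j < i + S.length → nearStart starts B j = true := by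
      intro j hj hj'
      unfold nearStart
      rw [List.any_eq_true]
      refine ⟨s, hs, ?_⟩
      simp only [decide_eq_true_eq]
      omega
    have hdecomp : List.range T.length =
        List.range' 0 i ++ List.range' i S.length ++
          List.range' (i + S.length) (T.length - i - S.length) := by
      have hT : T.length = S.length + (T.length - i - S.length) + i := by
        have := hocc.1; omega
      rw [List.range_eq_range']
      conv_lhs => rw [hT, ← List.range'_append_1, Nat.zero_add,
        Nat.add_comm S.length (T.length - i - S.length), ← List.range'_append_1]
      rw [List.append_assoc]
      have e1 := @List.range'_append_1 0 i S.length
      have e2 := @List.range'_append_1 0 (i + S.length) (T.length - i - S.length)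
      have e3 := @List.range'_append_1 (T.length - i - S.length) S.length i
      have e4 := @List.range'_append_1 0 (T.length - i - S.length) (S.length + i)
      simp only [Nat.zero_add] at e1 e2 e4 ⊢
      rw [e1, e2, e3, e4]
      congr 1
      omega
    rw [buildTPrime_eq, hdecomp, List.flatMap_append, List.flatMap_append,
      block_eq T starts B S.length i hocc.1 hnear, hocc.2]
    exact ⟨(List.range' 0 i).flatMap (piece T starts B),
      (List.range' (i + S.length) (T.length - i - S.length)).flatMap (piece T starts B),
      by simp [List.append_assoc]⟩
  · intro h
    rw [buildTPrime_eq, List.range_eq_range'] at h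
    exact infix_case T starts B T.length 0 S (by omega) hne h
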